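/- arXiv:2305.02545 — 3 statements merged into one kernel-verified Lean document; each statement's English description precedes it below -/
import Mathlib

section
/- Let G be an α_i-metric graph. For any vertices x,y,v and any integer k with 0 ≤ k ≤ d(x,y), there exists a vertex c in the slice S_k(x,y) such that d(v,c) ≤ max{d(v,x), d(v,y)} - min{d(x,c), d(y,c)} + i. -/
open SimpleGraph

variable {V : Type*}

/-- `Itv G u v x` means `x` lies on a shortest `(u,v)`-path, i.e. `x ∈ I(u,v)`. -/
def Itv (G : SimpleGraph V) (u v x : V) : Prop :=
  G.dist u x + G.dist x v = G.dist u v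

/-- `G` is an `α_i`-metric graph. -/
def AlphaI (G : SimpleGraph V) (i : ℕ) : Prop :=
  ∀ u v w x : V, Itv G u w v → Itv G v x w → G.Adj v w →
    G.dist u v + G.dist v x ≤ G.dist u x + i

/-- Eccentricity of a vertex. -/
noncomputable def ecc (G : SimpleGraph V) [Fintype V] (v : V) : ℕ :=
  Finset.univ.sup (fun u => G.dist v u)

/-- Radius of the graph. -/
noncomputable def grad (G : SimpleGraph V) [Fintype V] [Nonempty V] : ℕ :=
  Finset.univ.inf' Finset.univ_nonempty (fun v => ecc G v)

/-- Diameter of the graph. -/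
noncomputable def gdiam (G : SimpleGraph V) [Fintype V] : ℕ :=
  Finset.univ.sup (fun v => ecc G v)

private lemma dist_getVert_le {G : SimpleGraph V} (hG : G.Connected) {u w : V}
    (p : G.Walk u w) (k : ℕ) : G.dist u (p.getVert k) ≤ k := by
  induction k with
  | zero => simp
  | succ n ih =>
    by_cases h : n < p.length
    · have hadj := p.adj_getVert_succ h
      have h1 : G.dist (p.getVert n) (p.getVert (n + 1)) = 1 :=
        SimpleGraph.dist_eq_one_iff_adj.2 hadj
      have h2 := hG.dist_triangle (u := u) (v := p.getVert n) (w := p.getVert (n + 1))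
      omega
    · push_neg at h
      rw [p.getVert_of_length_le (by omega)]
      rw [p.getVert_of_length_le h] at ih
      omega

/-- Nonemptiness of the slice `S_k(x,y)`. -/
private lemma exists_slice {G : SimpleGraph V} (hG : G.Connected) (x y : V) (k : ℕ)
    (hk : k ≤ G.dist x y) :
    ∃ c : V, G.dist x c = k ∧ G.dist x c + G.dist c y = G.dist x y := by
  obtain ⟨p, hp⟩ := hG.exists_walk_length_eq_dist x y
  refine ⟨p.getVert k, ?_⟩
  have h1 : G.dist x (p.getVert k) ≤ k := dist_getVert_le hG p k
  have hrev : p.reverse.getVert (p.length - k) = p.getVert k := by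
    rw [p.getVert_reverse]
    congr 1
    omega
  have h2 : G.dist y (p.getVert k) ≤ p.length - k := by
    rw [← hrev]; exact dist_getVert_le hG p.reverse _
  have h3 := hG.dist_triangle (u := x) (v := p.getVert k) (w := y)
  have h4 : G.dist y (p.getVert k) = G.dist (p.getVert k) y := SimpleGraph.dist_comm
  omega

/-- A neighbor one step closer to `v`. -/
private lemma exists_step {G : SimpleGraph V} (hG : G.Connected) {c v : V}
    (h : G.dist c v ≠ 0) :
    ∃ w : V, G.Adj c w ∧ G.dist w v + 1 = G.dist c v := by
  obtain ⟨p, hp⟩ := SimpleGraph.exists_walk_of_dist_ne_zero h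
  have hlen : 0 < p.length := by omega
  have hadj : G.Adj c (p.getVert 1) := by
    have := p.adj_getVert_succ (i := 0) hlen
    simpa using this
  refine ⟨p.getVert 1, hadj, ?_⟩
  have hrev : p.reverse.getVert (p.length - 1) = p.getVert 1 := by
    rw [p.getVert_reverse]
    congr 1
    omega
  have h2 : G.dist v (p.getVert 1) ≤ p.length - 1 := by
    rw [← hrev]
    exact dist_getVert_le hG p.reverse _
  have h3 := hG.dist_triangle (u := c) (v := p.getVert 1) (w := v)
  have h4 : G.dist c (p.getVert 1) = 1 := SimpleGraph.dist_eq_one_iff_adj.2 hadj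
  have h5 : G.dist v (p.getVert 1) = G.dist (p.getVert 1) v := SimpleGraph.dist_comm
  omega

theorem stmt_3 [Fintype V] (G : SimpleGraph V) (hG : G.Connected) (i : ℕ)
    (hα : AlphaI G i) (x y v : V) (k : ℕ) (hk : k ≤ G.dist x y) :
    ∃ c : V, Itv G x y c ∧ G.dist x c = k ∧
      G.dist v c + min (G.dist x c) (G.dist y c) ≤
        max (G.dist v x) (G.dist v y) + i := by
  classical
  set n := G.dist x y with hn
  set S : Finset V := Finset.univ.filter
    (fun c => G.dist x c = k ∧ G.dist x c + G.dist c y = n) with hS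
  have hSne : S.Nonempty := by
    obtain ⟨c, hc1, hc2⟩ := exists_slice hG x y k hk
    exact ⟨c, by simp [hS, hc1]; omega⟩
  obtain ⟨c, hcS, hmin⟩ := S.exists_min_image (fun c => G.dist v c) hSne
  have hc : G.dist x c = k ∧ G.dist x c + G.dist c y = n := by
    simpa [hS] using hcS
  obtain ⟨hxc, hIc⟩ := hc
  refine ⟨c, hIc, hxc, ?_⟩
  have hcyc : G.dist c y = G.dist y c := SimpleGraph.dist_comm
  have hvc : G.dist v c = G.dist c v := SimpleGraph.dist_comm
  have hvx : G.dist x v = G.dist v x := SimpleGraph.dist_comm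
  by_cases h0 : G.dist v c = 0
  · have hveq : v = c := (hG.dist_eq_zero_iff).1 h0
    subst hveq
    have : G.dist v x = G.dist x v := SimpleGraph.dist_comm
    omega
  · obtain ⟨w, hadj, hw⟩ := exists_step hG (c := c) (v := v) (by omega)
    have hwc1 : G.dist w c = 1 := SimpleGraph.dist_eq_one_iff_adj.2 hadj.symm
    have hcw1 : G.dist c w = 1 := SimpleGraph.dist_eq_one_iff_adj.2 hadj
    have hwv : G.dist v w = G.dist w v := SimpleGraph.dist_comm
    have hxw_le : G.dist x w ≤ k + 1 := by
      have := hG.dist_triangle (u := x) (v := c) (w := w); omega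
    have hyw_le : G.dist y w ≤ G.dist y c + 1 := by
      have := hG.dist_triangle (u := y) (v := c) (w := w); omega
    by_cases hA : G.dist x w = k + 1
    · -- c ∈ I(w,x), apply α_i with (v, w, c, x)
      have hI1 : Itv G v c w := by
        unfold Itv; omega
      have hI2 : Itv G w x c := by
        unfold Itv
        have : G.dist c x = G.dist x c := SimpleGraph.dist_comm
        have : G.dist w x = G.dist x w := SimpleGraph.dist_comm
        omega
      have := hα v w c x hI1 hI2 (by simpa using hadj.symm)
      have : G.dist w x = G.dist x w := SimpleGraph.dist_comm
      omega
    · by_cases hB : G.dist y w = G.dist y c + 1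
      · -- c ∈ I(w,y), apply α_i with (v, w, c, y)
        have hI1 : Itv G v c w := by
          unfold Itv; omega
        have hI2 : Itv G w y c := by
          unfold Itv
          have : G.dist w y = G.dist y w := SimpleGraph.dist_comm
          omega
        have := hα v w c y hI1 hI2 (by simpa using hadj.symm)
        have : G.dist w y = G.dist y w := SimpleGraph.dist_comm
        omega
      · -- w is also in the slice, contradicting minimality of c
        exfalso
        have htri := hG.dist_triangle (u := x) (v := w) (w := y)
        have hwy : G.dist w y = G.dist y w := SimpleGraph.dist_comm
        have hxw : G.dist x w = k := by omega
        have hwS : w ∈ S := by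
          simp only [hS, Finset.mem_filter, Finset.mem_univ, true_and]
          omega
        have := hmin w hwS
        have this : G.dist v c ≤ G.dist v w := this
        have hvw : G.dist v w = G.dist w v := SimpleGraph.dist_comm
        omega
end

section
/- Let G be an α_i-metric graph and let x,y be vertices with d(x,y) ≥ 4i+2. Then any vertex c ∈ I(x,y) with d(x,c) ≥ 2i+1 and d(y,c) ≥ 2i+1 satisfies e(c) ≤ max{e(x), e(y)}, where e denotes eccentricity. -/
open SimpleGraph

variable {V : Type*}

/-- distance from start to the j-th vertex of a walk is at most j. -/
lemma dist_getVert_le_s5 {G : SimpleGraph V} (hG : G.Connected) {a b : V} (W : G.Walk a b)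
    (j : ℕ) : G.dist a (W.getVert j) ≤ j := by
  induction j with
  | zero => simp
  | succ j ih =>
    by_cases hj : j < W.length
    · have hadj := W.adj_getVert_succ hj
      have h1 : G.dist (W.getVert j) (W.getVert (j+1)) = 1 :=
        (SimpleGraph.dist_eq_one_iff_adj).2 hadj
      have htri := hG.dist_triangle (u := a) (v := W.getVert j) (w := W.getVert (j+1))
      omega
    · rw [W.getVert_of_length_le (by omega)]
      rw [W.getVert_of_length_le (by omega)] at ih
      omega

/-- existence of a last "increasing" step before index `m`. -/
lemma exists_last_up (f : ℕ → ℕ) (m : ℕ) (h : f 0 < f m) :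
    ∃ j < m, f j < f (j + 1) ∧ f m ≤ f (j + 1) := by
  induction m with
  | zero => omega
  | succ m ih =>
    by_cases hm : f m < f (m + 1)
    · exact ⟨m, by omega, hm, le_rfl⟩
    · have h0 : f 0 < f m := by omega
      obtain ⟨j, hj, h1, h2⟩ := ih h0
      exact ⟨j, by omega, h1, by omega⟩

/-- The key pointwise lemma. -/
lemma key_lemma {G : SimpleGraph V} (hG : G.Connected) {i : ℕ}
    (hα : AlphaI G i) {x y c : V}
    (hc : Itv G x y c) (hyc : 2 * i + 1 ≤ G.dist y c) (u : V) :
    G.dist u c ≤ max (G.dist u x) (G.dist u y) := by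
  by_contra hcon
  push_neg at hcon
  have hux : G.dist u x < G.dist u c := lt_of_le_of_lt (le_max_left _ _) hcon
  have huy : G.dist u y < G.dist u c := lt_of_le_of_lt (le_max_right _ _) hcon
  -- build a shortest x-y walk through c
  obtain ⟨P1, hP1⟩ := hG.exists_walk_length_eq_dist x c
  obtain ⟨P2, hP2⟩ := hG.exists_walk_length_eq_dist c y
  set W : G.Walk x y := P1.append P2 with hW
  set m : ℕ := G.dist x c with hm
  set k : ℕ := G.dist x y with hk
  have hWlen : W.length = k := by
    rw [hW, SimpleGraph.Walk.length_append, hP1, hP2]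
    have := hc
    unfold Itv at this
    omega
  have hmk : m ≤ k := by
    have := hc; unfold Itv at this
    have : G.dist x c + G.dist c y = k := this
    omega
  have hcy : G.dist c y = k - m := by
    have := hc; unfold Itv at this; omega
  have hWm : W.getVert m = c := by
    rw [hW, SimpleGraph.Walk.getVert_append]
    rw [hP1]
    simp [hm]
  -- distances along the walk
  have hdx : ∀ j, G.dist x (W.getVert j) ≤ j := fun j => dist_getVert_le_s5 hG W j
  have hdy : ∀ j, j ≤ k → G.dist (W.getVert j) y ≤ k - j := by
    intro j hj
    have := dist_getVert_le_s5 hG W.reverse (k - j)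
    rw [SimpleGraph.Walk.getVert_reverse, hWlen] at this
    have hkj : k - (k - j) = j := by omega
    rw [hkj] at this
    rw [SimpleGraph.dist_comm]
    exact this
  have hdexact : ∀ j, j ≤ k → G.dist x (W.getVert j) = j ∧ G.dist (W.getVert j) y = k - j := by
    intro j hj
    have h1 := hdx j
    have h2 := hdy j hj
    have h3 : k ≤ G.dist x (W.getVert j) + G.dist (W.getVert j) y :=
      hG.dist_triangle (u := x) (v := W.getVert j) (w := y)
    omega
  -- get the last increasing step before m
  set f : ℕ → ℕ := fun j => G.dist u (W.getVert j) with hf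
  have hf0 : f 0 = G.dist u x := by simp [hf]
  have hfm : f m = G.dist u c := by simp [hf, hWm]
  obtain ⟨j, hjm, hup, hge⟩ := exists_last_up f m (by omega)
  have hjk : j < k := by omega
  have hadj := W.adj_getVert_succ (by omega : j < W.length)
  have h1 : G.dist (W.getVert j) (W.getVert (j+1)) = 1 :=
    (SimpleGraph.dist_eq_one_iff_adj).2 hadj
  have htri := hG.dist_triangle (u := u) (v := W.getVert j) (w := W.getVert (j+1))
  have hstep : f (j+1) = f j + 1 := by
    simp only [hf] at *
    omega
  -- Itv conditions
  obtain ⟨hxj, hjy⟩ := hdexact j (by omega)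
  obtain ⟨hxj1, hj1y⟩ := hdexact (j+1) (by omega)
  have hI1 : Itv G u (W.getVert (j+1)) (W.getVert j) := by
    unfold Itv
    simp only [hf] at hstep
    omega
  have hI2 : Itv G (W.getVert j) y (W.getVert (j+1)) := by
    unfold Itv
    omega
  have := hα u (W.getVert j) (W.getVert (j+1)) y hI1 hI2 hadj
  -- conclude
  simp only [hf] at hge hstep
  rw [hWm] at hge
  rw [hjy] at this
  have hyc' : 2 * i + 1 ≤ G.dist c y := by rwa [SimpleGraph.dist_comm] at hyc
  omega

theorem stmt_5 [Fintype V] (G : SimpleGraph V) (hG : G.Connected) (i : ℕ)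
    (hα : AlphaI G i) (x y c : V) (hxy : 4 * i + 2 ≤ G.dist x y)
    (hc : Itv G x y c) (hxc : 2 * i + 1 ≤ G.dist x c) (hyc : 2 * i + 1 ≤ G.dist y c) :
    ecc G c ≤ max (ecc G x) (ecc G y) := by
  unfold ecc
  apply Finset.sup_le
  intro u _
  have h := key_lemma hG hα hc hyc u
  have hx : G.dist x u ≤ Finset.univ.sup (fun u => G.dist x u) :=
    Finset.le_sup (Finset.mem_univ u)
  have hy : G.dist y u ≤ Finset.univ.sup (fun u => G.dist y u) :=
    Finset.le_sup (Finset.mem_univ u)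
  rw [SimpleGraph.dist_comm (u := c) (v := u)]
  rw [SimpleGraph.dist_comm (u := u) (v := x), SimpleGraph.dist_comm (u := u) (v := y)] at h
  exact le_trans h (max_le_max hx hy)
end

section
/- Let G be an α_i-metric graph. Every vertex v that is not in the center C(G) has locality at most i+1, i.e., there exists a vertex x with e(x) < e(v) and d(v,x) ≤ i+1. -/
open SimpleGraph

variable {V : Type*}

/-- If `f` drops below its starting value along `[a,b]` while each step decreases by at most 1,
then there is a "descent" step `j` with `f j = f (j+1) + 1` and `f a ≤ f j`. -/
lemma exists_descent (f : ℕ → ℕ) :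
    ∀ n a b, b = a + n → (∀ k, a ≤ k → k < b → f k ≤ f (k+1) + 1) → f b < f a →
    ∃ j, a ≤ j ∧ j < b ∧ f j = f (j+1) + 1 ∧ f a ≤ f j := by
  intro n
  induction n with
  | zero =>
    intro a b hb _ hlt
    have : b = a := by omega
    subst this
    exact absurd hlt (lt_irrefl _)
  | succ m ih =>
    intro a b hb hstep hlt
    by_cases hc : f a = f (a+1) + 1
    · exact ⟨a, le_refl a, by omega, hc, le_refl _⟩
    · have h1 : f a ≤ f (a+1) := by
        have := hstep a (le_refl a) (by omega); omega
      have hlt' : f b < f (a+1) := lt_of_lt_of_le hlt h1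
      obtain ⟨j, hj1, hj2, hj3, hj4⟩ :=
        ih (a+1) b (by omega) (fun k hk hk' => hstep k (by omega) hk') hlt'
      exact ⟨j, by omega, hj2, hj3, le_trans h1 hj4⟩

lemma dist_le_ecc (G : SimpleGraph V) [Fintype V] (v u : V) : G.dist v u ≤ ecc G v :=
  Finset.le_sup (Finset.mem_univ u)

lemma exists_ecc (G : SimpleGraph V) [Fintype V] [Nonempty V] (v : V) :
    ∃ u, G.dist v u = ecc G v := by
  obtain ⟨u, _, hu⟩ := Finset.exists_mem_eq_sup Finset.univ Finset.univ_nonempty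
    (fun u => G.dist v u)
  exact ⟨u, hu.symm⟩

theorem stmt_9 [Fintype V] [Nonempty V] (G : SimpleGraph V) (hG : G.Connected) (i : ℕ)
    (hα : AlphaI G i) (v : V) (hv : ecc G v ≠ grad G) :
    ∃ x : V, ecc G x < ecc G v ∧ G.dist v x ≤ i + 1 := by
  -- the set of vertices with strictly smaller eccentricity is nonempty
  have hgr : grad G ≤ ecc G v := Finset.inf'_le _ (Finset.mem_univ v)
  have hgr' : grad G < ecc G v := lt_of_le_of_ne hgr (Ne.symm hv)
  obtain ⟨c, _, hc⟩ := Finset.exists_mem_eq_inf' (Finset.univ_nonempty (α := V))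
    (fun w => ecc G w)
  have hcS : ecc G c < ecc G v := by rw [← hc]; exact hgr'
  -- choose x with smaller eccentricity minimizing dist v x
  have hSne : (Finset.univ.filter (fun w => ecc G w < ecc G v)).Nonempty :=
    ⟨c, by simp [hcS]⟩
  obtain ⟨x, hxmem, hxmin⟩ := Finset.exists_min_image _ (fun w => G.dist v w) hSne
  have hxS : ecc G x < ecc G v := by simpa using hxmem
  refine ⟨x, hxS, ?_⟩
  by_contra hlong
  set l := G.dist v x with hl
  have hl2 : i + 2 ≤ l := by omega
  -- a shortest walk from v to x
  obtain ⟨p, hp⟩ := (hG v x).exists_walk_length_eq_dist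
  set y : ℕ → V := fun k => p.getVert k with hy
  have hy0 : y 0 = v := p.getVert_zero
  have hyl : y l = x := by rw [hy]; rw [← hl] at hp; rw [← hp]; exact p.getVert_length
  have hadj : ∀ k, k < l → G.Adj (y k) (y (k+1)) := by
    intro k hk
    exact p.adj_getVert_succ (by omega)
  have hd1 : ∀ k, k < l → G.dist (y k) (y (k+1)) = 1 := by
    intro k hk
    exact dist_eq_one_iff_adj.mpr (hadj k hk)
  -- distances along the walk
  have hdv : ∀ k, k ≤ l → G.dist v (y k) ≤ k := by
    intro k
    induction k with
    | zero => intro _; simp [hy0, SimpleGraph.dist_self]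
    | succ m ih =>
      intro hm
      calc G.dist v (y (m+1)) ≤ G.dist v (y m) + G.dist (y m) (y (m+1)) :=
            hG.dist_triangle
        _ ≤ m + 1 := by
            have := ih (by omega)
            have := hd1 m (by omega)
            omega
  have hdx : ∀ m, ∀ k, k + m = l → G.dist (y k) x ≤ m := by
    intro m
    induction m with
    | zero => intro k hk
              have hkl : k = l := by omega
              rw [hkl, hyl]
              simp [SimpleGraph.dist_self]
    | succ m ih =>
      intro k hk
      calc G.dist (y k) x ≤ G.dist (y k) (y (k+1)) + G.dist (y (k+1)) x :=
            hG.dist_triangle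
        _ ≤ m + 1 := by
            have := ih (k+1) (by omega)
            have := hd1 k (by omega)
            omega
  have hdveq : ∀ k, k ≤ l → G.dist v (y k) = k ∧ G.dist (y k) x = l - k := by
    intro k hk
    have h1 := hdv k hk
    have h2 := hdx (l - k) k (by omega)
    have h3 : l ≤ G.dist v (y k) + G.dist (y k) x := by
      rw [hl]; exact hG.dist_triangle
    omega
  -- the vertex at distance i+1 from v has eccentricity ≥ ecc v
  have hyv : G.dist v (y (i+1)) = i + 1 := (hdveq (i+1) (by omega)).1
  have heccy : ecc G v ≤ ecc G (y (i+1)) := by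
    by_contra h
    push_neg at h
    have := hxmin (y (i+1)) (by simp [h])
    omega
  -- u farthest from y (i+1)
  obtain ⟨u, hu⟩ := exists_ecc G (y (i+1))
  set f : ℕ → ℕ := fun k => G.dist u (y k) with hf
  have hfstep : ∀ k, i + 1 ≤ k → k < l → f k ≤ f (k+1) + 1 := by
    intro k _ hk
    calc f k ≤ G.dist u (y (k+1)) + G.dist (y (k+1)) (y k) := hG.dist_triangle
      _ = f (k+1) + 1 := by rw [SimpleGraph.dist_comm (u := y (k+1))]; rw [hd1 k hk]
  have hfl : f l < f (i+1) := by
    have h1 : f l ≤ ecc G x := by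
      rw [hf]; simp only; rw [hyl, SimpleGraph.dist_comm]; exact dist_le_ecc G x u
    have h2 : f (i+1) = ecc G (y (i+1)) := by
      rw [hf]; simp only; rw [SimpleGraph.dist_comm]; exact hu
    omega
  obtain ⟨j, hj1, hj2, hj3, hj4⟩ :=
    exists_descent f (l - (i+1)) (i+1) l (by omega) hfstep hfl
  -- apply the α_i condition to (u, y (j+1), y j, v)
  have hIa : Itv G u (y j) (y (j+1)) := by
    show G.dist u (y (j+1)) + G.dist (y (j+1)) (y j) = G.dist u (y j)
    rw [SimpleGraph.dist_comm (u := y (j+1)), hd1 j hj2]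
    have := hj3
    simp only [hf] at this
    omega
  have hIb : Itv G (y (j+1)) v (y j) := by
    show G.dist (y (j+1)) (y j) + G.dist (y j) v = G.dist (y (j+1)) v
    rw [SimpleGraph.dist_comm (u := y (j+1)), hd1 j hj2,
      SimpleGraph.dist_comm (u := y j), (hdveq j (by omega)).1,
      SimpleGraph.dist_comm (u := y (j+1)), (hdveq (j+1) (by omega)).1]
    omega
  have hAdj : G.Adj (y (j+1)) (y j) := (hadj j hj2).symm
  have hkey := hα u (y (j+1)) (y j) v hIa hIb hAdj
  have hd1' : G.dist (y (j+1)) v = j + 1 := by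
    rw [SimpleGraph.dist_comm (u := y (j+1))]; exact (hdveq (j+1) (by omega)).1
  have hduv : G.dist u v ≤ ecc G v := by rw [SimpleGraph.dist_comm]; exact dist_le_ecc G v u
  have h5 : ecc G v ≤ f (j+1) + 1 := by
    have h6 : ecc G v ≤ f (i+1) := by
      rw [hf]; simp only; rw [SimpleGraph.dist_comm]; rw [hu]; exact heccy
    omega
  -- contradiction: j ≤ i but j ≥ i+1
  rw [hd1'] at hkey
  have : G.dist u (y (j+1)) = f (j+1) := rfl
  omega
end
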